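/- The (α,β)-completion algorithm terminates after at most n(n−1)/2 iterations, and its output is an (α,β)-spanner of G. More precisely: consider any sequence of subgraphs H_0 ⊆ H_1 ⊆ ⋯ of G where H_{m+1} is obtained from H_m by picking a pair (x,y) with dist_{H_m}(x,y) > α·dist_G(x,y) + β·W_max(G), a shortest x–y path P_{x,y} in G, a minimal α-segmentation S of P_{x,y} with respect to H_m, and setting H_{m+1} = H_m ∪ E_α(S,H_m). Then no pair (x,y) can be picked in two different iterations (so the process stops after at most n(n−1)/2 iterations), and the final graph satisfies dist_H(u,v) ≤ α·dist_G(u,v) + β·W_max(G) for all u,v. -/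

import Mathlib

/- Weighted graphs: a `SimpleGraph V` together with a symmetric weight function
`w : V → V → ℝ≥0` that is positive on edges.  The weight of a walk is the sum of
its edge weights, and `wDist G w u v` is the shortest-path distance in `G`
(`∞` if `u` and `v` are not connected). -/

open scoped ENNReal

noncomputable def walkWeight {V : Type*} {G : SimpleGraph V} (w : V → V → NNReal)
    {u v : V} (p : G.Walk u v) : ℝ≥0∞ :=
  (p.darts.map fun d => (w d.toProd.1 d.toProd.2 : ℝ≥0∞)).sum

/-- Shortest-path distance in `G` w.r.t. the weights `w`. -/
noncomputable def wDist {V : Type*} (G : SimpleGraph V) (w : V → V → NNReal) (u v : V) : ℝ≥0∞ :=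
  ⨅ p : G.Walk u v, walkWeight w p

open Classical in
/-- `Wmax G w` is the maximum edge weight of `G`. -/
noncomputable def Wmax {V : Type*} [Fintype V] (G : SimpleGraph V) (w : V → V → NNReal) : NNReal :=
  Finset.univ.sup fun p : V × V => if G.Adj p.1 p.2 then w p.1 p.2 else 0

/-- `x 0, x 1, …, x t` is a shortest path in `G`: consecutive vertices are adjacent and
the distance in `G` between any two of its vertices is the weight of the subpath
between them (every subpath of a shortest path is shortest). -/
def IsShortestPath {V : Type*} (G : SimpleGraph V) (w : V → V → NNReal)
    (t : ℕ) (x : ℕ → V) : Prop :=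
  (∀ i, i < t → G.Adj (x i) (x (i + 1))) ∧
  (∀ i j, i ≤ j → j ≤ t →
    wDist G w (x i) (x j) = ∑ m ∈ Finset.Ico i j, (w (x m) (x (m + 1)) : ℝ≥0∞))

/-- An `α`-segmentation of the path `x 0, …, x t` w.r.t. `H`: indices
`0 = idx 0 < idx 1 < ⋯ < idx s = t` such that every segment of length `≥ 2`
has stretch at most `α` in `H`. -/
def IsSeg {V : Type*} (G H : SimpleGraph V) (w : V → V → NNReal) (α : ℝ≥0∞)
    (x : ℕ → V) (t s : ℕ) (idx : ℕ → ℕ) : Prop :=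
  idx 0 = 0 ∧ idx s = t ∧ (∀ j, j < s → idx j < idx (j + 1)) ∧
  (∀ j, j < s → 2 ≤ idx (j + 1) - idx j →
    wDist H w (x (idx j)) (x (idx (j + 1))) ≤ α * wDist G w (x (idx j)) (x (idx (j + 1))))

/-- A minimal `α`-segmentation: no consecutive run of segments can be merged into a
single segment while remaining an `α`-segmentation, i.e. the endpoints of any union of
at least two consecutive segments have stretch `> α` in `H`. -/
def IsMinimalSeg {V : Type*} (G H : SimpleGraph V) (w : V → V → NNReal) (α : ℝ≥0∞)
    (x : ℕ → V) (t s : ℕ) (idx : ℕ → ℕ) : Prop :=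
  IsSeg G H w α x t s idx ∧
  ∀ a b, a + 2 ≤ b → b ≤ s →
    α * wDist G w (x (idx a)) (x (idx b)) < wDist H w (x (idx a)) (x (idx b))

/-- `E_α(S,H)`: the edges corresponding to single-edge segments whose endpoints have
stretch `> α` in `H`. -/
def segEdges {V : Type*} (H : SimpleGraph V) (w : V → V → NNReal) (α : ℝ≥0∞)
    (x : ℕ → V) (s : ℕ) (idx : ℕ → ℕ) : Set (Sym2 V) :=
  {e | ∃ j, j < s ∧ idx (j + 1) = idx j + 1 ∧
      e = s(x (idx j), x (idx j + 1)) ∧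
      α * (w (x (idx j)) (x (idx j + 1)) : ℝ≥0∞) < wDist H w (x (idx j)) (x (idx j + 1))}


section helpers
variable {V : Type*} {G H H' : SimpleGraph V} {w : V → V → NNReal} {u v x : V}

variable {V : Type*} {G H H' : SimpleGraph V} {w : V → V → NNReal} {u v x : V}

lemma wDist_le (p : G.Walk u v) : wDist G w u v ≤ walkWeight w p := iInf_le _ p

lemma wDist_self_le : wDist G w u u ≤ 0 :=
  (wDist_le SimpleGraph.Walk.nil).trans_eq (by simp [walkWeight])

lemma walkWeight_append {u v x : V} (p : G.Walk u v) (q : G.Walk v x) :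
    walkWeight w (p.append q) = walkWeight w p + walkWeight w q := by
  simp [walkWeight, SimpleGraph.Walk.darts_append]

lemma wDist_triangle : wDist G w u x ≤ wDist G w u v + wDist G w v x := by
  have hr : wDist G w u v + wDist G w v x
      = ⨅ p : G.Walk u v, ⨅ q : G.Walk v x, (walkWeight w p + walkWeight w q) := by
    rw [wDist, ENNReal.iInf_add]
    exact iInf_congr fun p => by rw [wDist, ENNReal.add_iInf]
  rw [hr]
  refine le_iInf fun p => le_iInf fun q => ?_
  calc wDist G w u x ≤ walkWeight w (p.append q) := wDist_le _
    _ = _ := walkWeight_append p q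

lemma walkWeight_mapLe (h : H ≤ H') {u v : V} (p : H.Walk u v) :
    walkWeight w (p.mapLe h) = walkWeight w p := by
  induction p with
  | nil => rfl
  | cons ha p ih =>
    simp only [SimpleGraph.Walk.mapLe, SimpleGraph.Walk.map_cons] at *
    simp only [walkWeight, SimpleGraph.Walk.darts_cons, List.map_cons, List.sum_cons] at *
    rw [ih]
    rfl

lemma wDist_anti (h : H ≤ H') : wDist H' w u v ≤ wDist H w u v :=
  le_iInf fun p => (iInf_le _ (p.mapLe h)).trans_eq (walkWeight_mapLe h p)

lemma wDist_adj_le (h : H.Adj u v) : wDist H w u v ≤ w u v :=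
  (wDist_le (SimpleGraph.Walk.cons h SimpleGraph.Walk.nil)).trans_eq (by simp [walkWeight])

lemma walkWeight_reverse (hs : ∀ u v, w u v = w v u) (p : H.Walk u v) :
    walkWeight w p.reverse = walkWeight w p := by
  simp only [walkWeight, SimpleGraph.Walk.darts_reverse, List.map_reverse, List.sum_reverse,
    List.map_map]
  congr 1
  refine List.map_congr_left fun d _ => ?_
  simp [Function.comp, SimpleGraph.Dart.symm, hs d.toProd.1 d.toProd.2]

lemma wDist_symm (hs : ∀ u v, w u v = w v u) : wDist H w u v = wDist H w v u := by
  have key : ∀ a b : V, wDist H w a b ≤ wDist H w b a := fun a b =>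
    le_iInf fun p => (wDist_le p.reverse).trans_eq (walkWeight_reverse hs p)
  exact le_antisymm (key u v) (key v u)

lemma wDist_chain (y : ℕ → V) (s : ℕ) :
    wDist H w (y 0) (y s) ≤ ∑ j ∈ Finset.range s, wDist H w (y j) (y (j + 1)) := by
  induction s with
  | zero => simpa using wDist_self_le
  | succ s ih =>
    rw [Finset.sum_range_succ]
    exact wDist_triangle.trans (add_le_add_left ih _)

lemma idx_mono {idx : ℕ → ℕ} {s : ℕ} (h : ∀ j, j < s → idx j ≤ idx (j + 1)) :
    ∀ a b, a ≤ b → b ≤ s → idx a ≤ idx b := by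
  intro a b
  induction b with
  | zero => intro hab _; obtain rfl : a = 0 := Nat.le_zero.mp hab; exact le_rfl
  | succ b ih =>
    intro hab hbs
    rcases Nat.eq_or_lt_of_le hab with rfl | hlt
    · exact le_rfl
    · exact (ih (by omega) (by omega)).trans (h b (by omega))

lemma sum_segments {idx : ℕ → ℕ} (f : ℕ → ℝ≥0∞) :
    ∀ s, (∀ j, j < s → idx j ≤ idx (j + 1)) →
      ∑ j ∈ Finset.range s, ∑ m ∈ Finset.Ico (idx j) (idx (j + 1)), f m
        = ∑ m ∈ Finset.Ico (idx 0) (idx s), f m := by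
  intro s
  induction s with
  | zero => simp
  | succ s ih =>
    intro h
    rw [Finset.sum_range_succ, ih (fun j hj => h j (by omega)),
      Finset.sum_Ico_consecutive _ (idx_mono h 0 s (by omega) (by omega)) (h s (by omega))]

lemma step_bound' {α : ℝ≥0∞} (hα : 1 ≤ α) {t s : ℕ} {x : ℕ → V} {idx : ℕ → ℕ}
    (hsp : IsShortestPath G w t x)
    (hseg : IsSeg G H w α x t s idx)
    (hH' : H' = H ⊔ SimpleGraph.fromEdgeSet (segEdges H w α x s idx)) :
    wDist H' w (x 0) (x t) ≤ α * wDist G w (x 0) (x t) := by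
  obtain ⟨hadj, hdist⟩ := hsp
  obtain ⟨h0, hs, hlt, hsegle⟩ := hseg
  have hHle : H ≤ H' := hH' ▸ le_sup_left
  have hmono := idx_mono (fun j hj => (hlt j hj).le)
  have key : ∀ j, j < s → wDist H' w (x (idx j)) (x (idx (j + 1)))
      ≤ α * ∑ m ∈ Finset.Ico (idx j) (idx (j + 1)), (w (x m) (x (m + 1)) : ℝ≥0∞) := by
    intro j hj
    have hjt : idx (j + 1) ≤ t := hs ▸ hmono (j + 1) s hj le_rfl
    have hij : idx j < idx (j + 1) := hlt j hj
    have hG : wDist G w (x (idx j)) (x (idx (j + 1)))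
        = ∑ m ∈ Finset.Ico (idx j) (idx (j + 1)), (w (x m) (x (m + 1)) : ℝ≥0∞) :=
      hdist _ _ hij.le hjt
    rw [← hG]
    by_cases h2 : 2 ≤ idx (j + 1) - idx j
    · exact (wDist_anti hHle).trans (hsegle j hj h2)
    · have hsucc : idx (j + 1) = idx j + 1 := by omega
      have hm : idx j < t := by omega
      rw [hsucc, hdist (idx j) (idx j + 1) (by omega) (by omega), Nat.Ico_succ_singleton,
        Finset.sum_singleton]
      by_cases hc : α * (w (x (idx j)) (x (idx j + 1)) : ℝ≥0∞)
          < wDist H w (x (idx j)) (x (idx j + 1))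
      · have hadj' : H'.Adj (x (idx j)) (x (idx j + 1)) := by
          rw [hH']
          refine Or.inr ⟨⟨j, hj, hsucc, rfl, hc⟩, (hadj (idx j) hm).ne⟩
        calc wDist H' w (x (idx j)) (x (idx j + 1)) ≤ w (x (idx j)) (x (idx j + 1)) :=
              wDist_adj_le hadj'
          _ ≤ α * w (x (idx j)) (x (idx j + 1)) := le_mul_of_one_le_left zero_le hα
      · exact (wDist_anti hHle).trans (not_lt.mp hc)
  calc wDist H' w (x 0) (x t) = wDist H' w (x (idx 0)) (x (idx s)) := by rw [h0, hs]
    _ ≤ ∑ j ∈ Finset.range s, wDist H' w (x (idx j)) (x (idx (j + 1))) :=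
        wDist_chain (fun j => x (idx j)) s
    _ ≤ ∑ j ∈ Finset.range s, α * ∑ m ∈ Finset.Ico (idx j) (idx (j + 1)),
        (w (x m) (x (m + 1)) : ℝ≥0∞) := Finset.sum_le_sum fun j hj => key j (Finset.mem_range.mp hj)
    _ = α * ∑ j ∈ Finset.range s, ∑ m ∈ Finset.Ico (idx j) (idx (j + 1)),
        (w (x m) (x (m + 1)) : ℝ≥0∞) := (Finset.mul_sum _ _ _).symm
    _ = α * ∑ m ∈ Finset.Ico (idx 0) (idx s), (w (x m) (x (m + 1)) : ℝ≥0∞) := by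
        rw [sum_segments _ s (fun j hj => (hlt j hj).le)]
    _ = α * wDist G w (x 0) (x t) := by
        rw [h0, hs, hdist 0 t (Nat.zero_le _) le_rfl]

end helpers

/-- **Lemma (termination and correctness of the `(α,β)`-completion).**
Consider any execution `H_0 ⊆ H_1 ⊆ ⋯ ⊆ H_M` of the `(α,β)`-completion: at step `i < M`
a pair `(p i, q i)` with `dist_{H_i}(p i, q i) > α·dist_G(p i, q i) + β·W_max(G)` is picked,
a shortest `p i`–`q i` path `xs i` is chosen, a minimal `α`-segmentation of it w.r.t. `H_i`
is computed, and `H_{i+1} = H_i ∪ E_α(S, H_i)`.  Then: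
(1) every previously picked pair satisfies the target stretch at all later iterations;
(2) no pair is picked at two different iterations;
(3) the process performs at most `n(n-1)/2` iterations; and
(4) if no violating pair remains, the final graph is an `(α,β)`-spanner of `G`. -/
theorem completion_terminates_and_correct {V : Type*} [Fintype V]
    (G : SimpleGraph V) (w : V → V → NNReal)
    (hsymm : ∀ u v, w u v = w v u)
    (hpos : ∀ u v, G.Adj u v → 0 < w u v)
    (α : NNReal) (hα : 1 ≤ α) (β : NNReal)
    (M : ℕ) (Hs : ℕ → SimpleGraph V) (hH0 : Hs 0 ≤ G)
    (p q : ℕ → V) (t : ℕ → ℕ) (xs : ℕ → ℕ → V) (s : ℕ → ℕ) (idx : ℕ → ℕ → ℕ)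
    (hstep : ∀ i, i < M →
      ((α : ℝ≥0∞) * wDist G w (p i) (q i) + (β : ℝ≥0∞) * (Wmax G w : ℝ≥0∞) <
          wDist (Hs i) w (p i) (q i)) ∧
      xs i 0 = p i ∧ xs i (t i) = q i ∧
      IsShortestPath G w (t i) (xs i) ∧
      IsMinimalSeg G (Hs i) w (α : ℝ≥0∞) (xs i) (t i) (s i) (idx i) ∧
      Hs (i + 1) = Hs i ⊔ SimpleGraph.fromEdgeSet
        (segEdges (Hs i) w (α : ℝ≥0∞) (xs i) (s i) (idx i))) :
    (∀ i j, i < j → j ≤ M →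
      wDist (Hs j) w (p i) (q i) ≤
        (α : ℝ≥0∞) * wDist G w (p i) (q i) + (β : ℝ≥0∞) * (Wmax G w : ℝ≥0∞)) ∧
    (∀ i j, i < j → j < M → s(p i, q i) ≠ s(p j, q j)) ∧
    M ≤ Fintype.card V * (Fintype.card V - 1) / 2 ∧
    ((∀ u v : V, ¬ ((α : ℝ≥0∞) * wDist G w u v + (β : ℝ≥0∞) * (Wmax G w : ℝ≥0∞) <
        wDist (Hs M) w u v)) →
      ∀ u v : V, wDist (Hs M) w u v ≤
        (α : ℝ≥0∞) * wDist G w u v + (β : ℝ≥0∞) * (Wmax G w : ℝ≥0∞)) := by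
  
  have part1 : ∀ i j, i < j → j ≤ M →
      wDist (Hs j) w (p i) (q i) ≤
        (α : ℝ≥0∞) * wDist G w (p i) (q i) + (β : ℝ≥0∞) * (Wmax G w : ℝ≥0∞) := by
    intro i j hij hjM
    obtain ⟨-, hx0, hxt, hsp, hms, hHs⟩ := hstep i (lt_of_lt_of_le hij hjM)
    have hstep1 : wDist (Hs (i + 1)) w (p i) (q i) ≤ (α : ℝ≥0∞) * wDist G w (p i) (q i) := by
      have := step_bound' (by exact_mod_cast hα) hsp hms.1 hHs
      rwa [hx0, hxt] at this
    have hsub : Hs (i + 1) ≤ Hs j := by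
      clear hstep1 hHs
      induction j with
      | zero => omega
      | succ j ih =>
        rcases Nat.eq_or_lt_of_le (Nat.succ_le_of_lt hij) with h | h
        · exact h ▸ le_rfl
        · obtain ⟨-, -, -, -, -, hHj⟩ := hstep j (by omega)
          exact (ih (by omega) (by omega)).trans (hHj ▸ le_sup_left)
    calc wDist (Hs j) w (p i) (q i) ≤ wDist (Hs (i + 1)) w (p i) (q i) := wDist_anti hsub
      _ ≤ (α : ℝ≥0∞) * wDist G w (p i) (q i) := hstep1
      _ ≤ _ := le_self_add
  have part2 : ∀ i j, i < j → j < M → s(p i, q i) ≠ s(p j, q j) := by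
    intro i j hij hjM heq
    have h1 := part1 i j hij hjM.le
    have hgt := (hstep j hjM).1
    rcases Sym2.eq_iff.mp heq with ⟨hp, hq⟩ | ⟨hp, hq⟩
    · rw [hp, hq] at h1
      exact absurd h1 (not_le.mpr hgt)
    · rw [hp, hq, wDist_symm hsymm, wDist_symm (H := G) hsymm] at h1
      exact absurd h1 (not_le.mpr hgt)
  refine ⟨part1, part2, ?_, fun h u v => not_lt.mp (h u v)⟩
  · classical
    have hne : ∀ i, i < M → p i ≠ q i := by
      intro i hi h
      have hgt := (hstep i hi).1
      rw [h] at hgt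
      exact LT.lt.not_ge (hgt.trans_le wDist_self_le) zero_le
    have hinj : Function.Injective
        (fun i : Fin M => (⟨s(p i, q i), by
          simp only [Sym2.isDiag_iff_proj_eq]
          exact hne i i.2⟩ : {e : Sym2 V // ¬ e.IsDiag})) := by
      intro i j hij
      simp only [Subtype.mk.injEq] at hij
      by_contra hne'
      rcases lt_trichotomy (i : ℕ) (j : ℕ) with h | h | h
      · exact part2 i j h j.2 hij
      · exact hne' (Fin.ext h)
      · exact part2 j i h i.2 hij.symm
    have := Fintype.card_le_of_injective _ hinj
    rwa [Fintype.card_fin, Sym2.card_subtype_not_diag, Nat.choose_two_right] at this
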